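/- Let d ≥ 2, let {e_n}_{n=1}^{N} be a family of N mutually unbiased orthonormal bases of ℂ^d with projections Π_{nk}, let ψ ∈ ℂ^d be a unit vector that is mutually coherent with respect to these N MUBs (|⟨e_n(k), ψ⟩|² = 1/d for all n, k), and let ρ = Σ_{n,k} λ_{nk} Π_{nk} + r·|ψ⟩⟨ψ| with real coefficients λ_{nk} and a real number r, such that tr(ρ) = 1. Then the probabilities p_{nk} = tr(Π_{nk} ρ) satisfy Σ_{n=1}^{N} Σ_{k=1}^{d} p_{nk}² = tr(ρ²) + (N−1)/d − r²(d−1)/d. -/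

import Mathlib

open scoped BigOperators

/-- Rank-one orthogonal projection `|v⟩⟨v|` onto a vector `v ∈ ℂ^d`, as a matrix. -/
noncomputable def proj {d : ℕ} (v : EuclideanSpace ℂ (Fin d)) : Matrix (Fin d) (Fin d) ℂ :=
  Matrix.of fun i j => v i * star (v j)

/-- A family of orthonormal bases of `ℂ^d` is mutually unbiased if
`|⟨e n k, e m l⟩|² = 1/d` for all `n ≠ m` and all `k, l`. -/
def MutuallyUnbiased {d N : ℕ} (e : Fin N → Fin d → EuclideanSpace ℂ (Fin d)) : Prop :=
  ∀ n m : Fin N, n ≠ m → ∀ k l : Fin d,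
    ‖(inner ℂ (e n k) (e m l) : ℂ)‖ ^ 2 = 1 / d

lemma tr_pp {d : ℕ} (v w : EuclideanSpace ℂ (Fin d)) :
    (proj v * proj w).trace = (inner ℂ w v : ℂ) * (inner ℂ v w : ℂ) := by
  simp only [Matrix.trace, Matrix.diag, Matrix.mul_apply, proj, Matrix.of_apply,
    PiLp.inner_apply, RCLike.inner_apply, starRingEnd_apply]
  rw [Finset.sum_mul_sum]
  exact Finset.sum_congr rfl fun i _ => Finset.sum_congr rfl fun j _ => by ring

lemma tr_pp_re {d : ℕ} (v w : EuclideanSpace ℂ (Fin d)) :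
    ((proj v * proj w).trace).re = ‖(inner ℂ v w : ℂ)‖ ^ 2 := by
  have h : (inner ℂ w v : ℂ) = starRingEnd ℂ (inner ℂ v w : ℂ) := (inner_conj_symm ..).symm
  rw [tr_pp, h, mul_comm, Complex.mul_conj]
  rw [Complex.ofReal_re, Complex.normSq_eq_norm_sq]

lemma tr_proj {d : ℕ} (v : EuclideanSpace ℂ (Fin d)) :
    (proj v).trace = (inner ℂ v v : ℂ) := by
  simp only [Matrix.trace, Matrix.diag, proj, Matrix.of_apply, PiLp.inner_apply,
    RCLike.inner_apply, starRingEnd_apply]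

lemma tr_proj_rho {d N : ℕ} (e : Fin N → Fin d → EuclideanSpace ℂ (Fin d))
    (lam : Fin N → Fin d → ℝ) (r : ℝ) (ψ a : EuclideanSpace ℂ (Fin d)) :
    ((proj a * ((∑ n : Fin N, ∑ k : Fin d, (lam n k : ℂ) • proj (e n k)) + (r : ℂ) • proj ψ)).trace).re
    = (∑ n : Fin N, ∑ k : Fin d, lam n k * ‖(inner ℂ a (e n k) : ℂ)‖ ^ 2) + r * ‖(inner ℂ a ψ : ℂ)‖ ^ 2 := by
  simp only [mul_add, Finset.mul_sum, Matrix.mul_smul, Matrix.trace_add, Matrix.trace_sum,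
    Matrix.trace_smul, smul_eq_mul, Complex.add_re, Complex.re_sum, Complex.mul_re,
    Complex.ofReal_re, Complex.ofReal_im, zero_mul, sub_zero, tr_pp_re]

theorem stmt_15 (d N : ℕ) (hd : 2 ≤ d)
    (e : Fin N → Fin d → EuclideanSpace ℂ (Fin d))
    (horth : ∀ n, Orthonormal ℂ (e n))
    (hmub : MutuallyUnbiased e)
    (ψ : EuclideanSpace ℂ (Fin d)) (hψ : ‖ψ‖ = 1)
    (hcoh : ∀ (n : Fin N) (k : Fin d), ‖(inner ℂ (e n k) ψ : ℂ)‖ ^ 2 = 1 / d)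
    (lam : Fin N → Fin d → ℝ) (r : ℝ)
    (ρ : Matrix (Fin d) (Fin d) ℂ)
    (hρ : ρ = (∑ n : Fin N, ∑ k : Fin d, (lam n k : ℂ) • proj (e n k)) + (r : ℂ) • proj ψ)
    (htr : ρ.trace = 1)
    (p : Fin N → Fin d → ℝ)
    (hp : ∀ n k, p n k = ((proj (e n k) * ρ).trace).re) :
    ∑ n : Fin N, ∑ k : Fin d, (p n k) ^ 2 =
      ((ρ * ρ).trace).re + ((N : ℝ) - 1) / d - r ^ 2 * ((d : ℝ) - 1) / d := by
  have hd0 : (d : ℝ) ≠ 0 := by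
    have : 0 < d := by omega
    exact_mod_cast this.ne'
  set L : Fin N → ℝ := fun n => ∑ k : Fin d, lam n k with hL
  set S : ℝ := ∑ n : Fin N, L n with hSdef
  -- unit vectors
  have hunit : ∀ n k, ‖e n k‖ = 1 := fun n k => (horth n).1 k
  -- value of overlaps
  have hT : ∀ n k m l, ‖(inner ℂ (e n k) (e m l) : ℂ)‖ ^ 2
      = if n = m then (if k = l then (1:ℝ) else 0) else 1 / d := by
    intro n k m l
    by_cases h : n = m
    · subst h
      rw [if_pos rfl, (orthonormal_iff_ite.mp (horth n)) k l]
      by_cases hk : k = l <;> simp [hk]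
    · rw [if_neg h]; exact hmub n m h k l
  have hTψ : ∀ n k, ‖(inner ℂ ψ (e n k) : ℂ)‖ ^ 2 = 1 / d := by
    intro n k
    rw [show (inner ℂ ψ (e n k) : ℂ) = starRingEnd ℂ (inner ℂ (e n k) ψ : ℂ) from
      (inner_conj_symm ..).symm, RCLike.norm_conj, hcoh]
  have hψψ : ‖(inner ℂ ψ ψ : ℂ)‖ ^ 2 = 1 := by
    rw [inner_self_eq_norm_sq_to_K, hψ]
    simp
  -- trace condition
  have hS : S + r = 1 := by
    have h1 : ρ.trace = ((S + r : ℝ) : ℂ) := by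
      rw [hρ]
      simp only [Matrix.trace_add, Matrix.trace_sum, Matrix.trace_smul, smul_eq_mul, tr_proj,
        inner_self_eq_norm_sq_to_K, hψ, hunit]
      push_cast [hSdef, hL]
      ring_nf
    rw [h1] at htr
    exact_mod_cast htr
  -- explicit value of p
  have hp' : ∀ n k, p n k = lam n k - L n / d + 1 / d := by
    intro n k
    rw [hp, hρ, tr_proj_rho, hcoh n k]
    have hrow : ∀ m, (∑ l, lam m l * ‖(inner ℂ (e n k) (e m l) : ℂ)‖ ^ 2)
        = if n = m then lam m k else L m / d := by
      intro m
      by_cases h : n = m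
      · subst h
        simp only [hT, if_pos rfl, mul_ite, mul_one, mul_zero, if_true]
        simp [Finset.sum_ite_eq]
      · simp only [hT, if_neg h, mul_one_div]
        exact (Finset.sum_div ..).symm
    rw [Finset.sum_congr rfl fun m _ => hrow m]
    have hsplit : ∀ m : Fin N, (if n = m then lam m k else L m / d)
        = (if n = m then lam m k - L m / d else 0) + L m / d := by
      intro m; by_cases h : n = m <;> simp [h]
    rw [Finset.sum_congr rfl fun m _ => hsplit m, Finset.sum_add_distrib,
      Finset.sum_ite_eq Finset.univ n (fun m => lam m k - L m / d)]
    simp only [Finset.mem_univ, if_true, ← Finset.sum_div]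
    rw [← hSdef]
    field_simp
    linarith [hS]
  -- trace of proj ψ * ρ
  have hq : ((proj ψ * ρ).trace).re = S / d + r := by
    rw [hρ, tr_proj_rho]
    simp only [hTψ, mul_one_div, hψψ, mul_one]
    congr 1
    rw [hSdef, Finset.sum_div]
    exact Finset.sum_congr rfl fun n _ => (Finset.sum_div ..).symm
  -- trace of ρ²
  have hρ2 : ((ρ * ρ).trace).re = (∑ n, ∑ k, lam n k * p n k) + r * (S / d + r) := by
    nth_rewrite 1 [hρ]
    simp only [add_mul, Finset.sum_mul, smul_mul_assoc, Matrix.trace_add, Matrix.trace_sum,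
      Matrix.trace_smul, smul_eq_mul, Complex.add_re, Complex.re_sum, Complex.mul_re,
      Complex.ofReal_re, Complex.ofReal_im, zero_mul, sub_zero]
    rw [hq]
    congr 1
    exact Finset.sum_congr rfl fun n _ => Finset.sum_congr rfl fun k _ => by rw [← hp]
  -- per-basis identity
  have key : ∀ n, (∑ k, p n k ^ 2) = (∑ k, lam n k * p n k) + (1 - L n) / d := by
    intro n
    have hsum : ∑ k : Fin d, p n k = 1 := by
      have h2 : ∑ k : Fin d, p n k = L n - (d : ℝ) * (L n / d) + (d : ℝ) * (1 / d) := by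
        simp only [hp' n]
        rw [Finset.sum_add_distrib, Finset.sum_sub_distrib, Finset.sum_const, Finset.card_univ]
        simp [mul_comm, nsmul_eq_mul]
        rfl
      rw [h2]
      field_simp
      ring
    have hterm : ∀ k, p n k ^ 2 = lam n k * p n k + (1 / d - L n / d) * p n k := by
      intro k; rw [hp' n k]; ring
    rw [Finset.sum_congr rfl fun k _ => hterm k, Finset.sum_add_distrib, ← Finset.mul_sum,
      hsum, mul_one]
    ring
  -- put it together
  rw [Finset.sum_congr rfl fun n _ => key n, Finset.sum_add_distrib, hρ2]
  have hsum2 : ∑ n : Fin N, (1 - L n) / d = ((N : ℝ) - S) / d := by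
    rw [← Finset.sum_div, Finset.sum_sub_distrib, Finset.sum_const, Finset.card_univ]
    simp [hSdef]
  rw [hsum2]
  have hSr : S = 1 - r := by linarith
  rw [hSr]
  field_simp
  ring_nf
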